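/- For every n ≥ 1, the number of spanning trees of the ladder graph G^{(n)} equals the cardinality of the set 𝕋^{(n)} = {(T_1,…,T_n) ∈ {A,B,C,D}^n : (T_i, T_{i+1}) ≠ (A,B) for all i = 1,…,n−1}; in fact there is an explicit bijection Ψ_tree : 𝕋^{(n)} → {spanning trees of G^{(n)}}. -/

import Mathlib

open MeasureTheory Real
open scoped ENNReal NNReal

/-- The vertex set `{0, …, n} × {1, 2}` of the finite ladder `G^{(n)}`. -/
abbrev LadderV (n : ℕ) := Fin (n + 1) × Fin 2

/-- The ladder graph `G^{(n)}`: two vertices are adjacent iff their `ℓ¹`-distance is 1,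
i.e. either same column and different rows, or same row and neighboring columns. -/
def ladderGraph (n : ℕ) : SimpleGraph (LadderV n) where
  Adj u v := (u.1 = v.1 ∧ u.2 ≠ v.2) ∨ (u.2 = v.2 ∧ ((u.1 : ℕ) + 1 = v.1 ∨ (v.1 : ℕ) + 1 = u.1))
  symm := by
    constructor
    intro u v h
    rcases h with ⟨h1, h2⟩ | ⟨h1, h2⟩
    · exact Or.inl ⟨h1.symm, fun hc => h2 hc.symm⟩
    · exact Or.inr ⟨h1.symm, h2.symm⟩
  loopless := by
    constructor
    intro u h
    rcases h with ⟨-, h2⟩ | ⟨-, h2⟩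
    · exact h2 rfl
    · omega

/-- The lower horizontal edge `x_i = {(i−1,1),(i,1)}` (0-based index). -/
def edgeLow (n : ℕ) (i : Fin n) : Sym2 (LadderV n) :=
  s((i.castSucc, (0 : Fin 2)), (i.succ, (0 : Fin 2)))

/-- The upper horizontal edge `x̄_i = {(i−1,2),(i,2)}` (0-based index). -/
def edgeHigh (n : ℕ) (i : Fin n) : Sym2 (LadderV n) :=
  s((i.castSucc, (1 : Fin 2)), (i.succ, (1 : Fin 2)))

/-- The rung `z_i = {(i,1),(i,2)}`. -/
def edgeRung (n : ℕ) (i : Fin (n + 1)) : Sym2 (LadderV n) :=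
  s((i, (0 : Fin 2)), (i, (1 : Fin 2)))

/-- `x_v`: the sum of the weights of all edges incident to the vertex `v`. -/
noncomputable def vertexWeight (n : ℕ) (w : Sym2 (LadderV n) → ℝ) (v : LadderV n) : ℝ :=
  ∑ e ∈ (Set.toFinite ((ladderGraph n).incidenceSet v)).toFinset, w e

/-- The matrix `A^{(n)}(x)` (with 0-based indices; paper index `i` is `Fin`-index `i − 1`). -/
noncomputable def Amatrix (n : ℕ) (w : Sym2 (LadderV n) → ℝ) : Matrix (Fin n) (Fin n) ℝ :=
  Matrix.of fun k l =>
    if k = l then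
      1 / w (edgeRung n k.castSucc) + 1 / w (edgeLow n k) + 1 / w (edgeHigh n k)
        + 1 / w (edgeRung n k.succ)
    else if (k : ℕ) + 1 = l then -(1 / w (edgeRung n l.castSucc))
    else if (l : ℕ) + 1 = k then -(1 / w (edgeRung n k.castSucc))
    else 0

/-- The density `Φ^{(n)}(x, y, T)` of Coppersmith–Diaconis type, where the spanning tree is
given as a subgraph `H` (real exponents are `Real.rpow`). -/
noncomputable def Phi (a : ℝ) (n : ℕ) (w : Sym2 (LadderV n) → ℝ) (y : Fin n → ℝ)
    (H : SimpleGraph (LadderV n)) : ℝ :=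
  ((∏ i : Fin n, (w (edgeLow n i) * w (edgeHigh n i)) ^ (a - 3 / 2))
      * (∏ i : Fin (n + 1), w (edgeRung n i) ^ (a - 3 / 2))
      * ∏ e ∈ (Set.toFinite H.edgeSet).toFinset, w e)
    / (vertexWeight n w (0, 0) ^ (a + 1 / 2) * vertexWeight n w (0, 1) ^ a
        * (∏ i : Fin (n + 1),
            if 0 < (i : ℕ) ∧ (i : ℕ) < n then
              (vertexWeight n w (i, 0) * vertexWeight n w (i, 1)) ^ ((3 * a + 1) / 2)
            else 1)
        * vertexWeight n w (Fin.last n, 0) ^ (a + 1 / 2)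
        * vertexWeight n w (Fin.last n, 1) ^ (a + 1 / 2))
    * Real.exp (-(1 / 2) * (dotProduct y ((Amatrix n w).mulVec y)))

instance (n : ℕ) : Finite (SimpleGraph (LadderV n)) :=
  Finite.of_injective (fun G => G.Adj) fun _ _ h => SimpleGraph.ext h

/-- The type of spanning trees of the ladder `G^{(n)}`: connected acyclic spanning
subgraphs. -/
abbrev SpanningTree (n : ℕ) := {H : SimpleGraph (LadderV n) // H ≤ ladderGraph n ∧ H.IsTree}

instance (n : ℕ) : MeasurableSpace (SpanningTree n) := ⊤

instance (n : ℕ) : MeasurableSingletonClass (SpanningTree n) :=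
  ⟨fun _ => MeasurableSpace.measurableSet_top⟩

open SimpleGraph

variable {V : Type*}

lemma cross_lemma (G : SimpleGraph V) (S : Set V) {u v : V} (hr : G.Reachable u v)
    (hu : u ∈ S) (hv : v ∉ S) : ∃ a b, G.Adj a b ∧ a ∈ S ∧ b ∉ S := by
  obtain ⟨w⟩ := hr
  induction w with
  | nil => exact absurd hu hv
  | cons h p ih =>
    rename_i a b c
    by_cases hb : b ∈ S
    · exact ih hb hv
    · exact ⟨a, b, h, hu, hb⟩

lemma no_reach_of_no_adj (G : SimpleGraph V) {u v : V} (hne : u ≠ v)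
    (h : ∀ b, ¬ G.Adj v b) : ¬ G.Reachable u v := by
  intro hr
  obtain ⟨w⟩ := hr.symm
  cases w with
  | nil => exact hne rfl
  | cons hadj p => exact h _ hadj

lemma sdiff_adj_iff (G : SimpleGraph V) (e : Sym2 V) {a b : V} :
    (G \ fromEdgeSet {e}).Adj a b ↔ G.Adj a b ∧ s(a, b) ≠ e := by
  simp only [sdiff_adj, fromEdgeSet_adj, Set.mem_singleton_iff]
  constructor
  · rintro ⟨h1, h2⟩
    exact ⟨h1, fun hh => h2 ⟨hh, h1.ne⟩⟩
  · rintro ⟨h1, h2⟩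
    exact ⟨h1, fun hh => h2 hh.1⟩

lemma connected_delete (G : SimpleGraph V) (e : Sym2 V) (he : e ∈ G.edgeSet)
    (hb : ¬ G.IsBridge e) (hc : G.Connected) : (G \ fromEdgeSet {e}).Connected := by
  induction e with
  | _ x y =>
    rw [isBridge_iff] at hb
    rw [mem_edgeSet] at he
    push_neg at hb
    have hxy : (G \ fromEdgeSet {s(x, y)}).Reachable x y := hb
    have key : ∀ {a b : V}, G.Reachable a b → (G \ fromEdgeSet {s(x, y)}).Reachable a b := by
      intro a b hab
      obtain ⟨w⟩ := hab
      induction w with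
      | nil => exact Reachable.refl _
      | cons h p ih =>
        rename_i u c d
        refine Reachable.trans ?_ ih
        by_cases hec : s(u, c) = s(x, y)
        · rw [Sym2.eq_iff] at hec
          rcases hec with ⟨rfl, rfl⟩ | ⟨rfl, rfl⟩
          · exact hxy
          · exact hxy.symm
        · exact ((sdiff_adj_iff G _).mpr ⟨h, hec⟩).reachable
    have : Nonempty V := hc.nonempty
    exact Connected.mk fun a b => key (hc.preconnected a b)

lemma edgeFinset_delete [Fintype V] [DecidableEq V] (G : SimpleGraph V) (e : Sym2 V)
    [Fintype G.edgeSet] [Fintype (G \ fromEdgeSet {e} : SimpleGraph V).edgeSet] :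
    (G \ fromEdgeSet {e}).edgeFinset = G.edgeFinset.erase e := by
  ext a
  have hd : a ∈ G.edgeSet → ¬ a.IsDiag := fun h => not_isDiag_of_mem_edgeSet _ h
  simp only [mem_edgeFinset, Finset.mem_erase, edgeSet_sdiff, edgeSet_fromEdgeSet,
    Set.mem_diff, Set.mem_singleton_iff, Set.mem_setOf_eq]
  tauto

lemma card_le_of_connected [Fintype V] [DecidableEq V] :
    ∀ (m : ℕ) (G : SimpleGraph V) (_ : Fintype G.edgeSet) (_ : G.Connected)
      (_ : G.edgeFinset.card = m), Fintype.card V ≤ m + 1 := by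
  intro m
  induction m using Nat.strong_induction_on with
  | _ m ih =>
    intro G _ hc hcard
    by_cases hac : G.IsAcyclic
    · have ht : G.IsTree := ⟨hc, hac⟩
      rw [← hcard, ht.card_edgeFinset]
    · simp only [IsAcyclic, not_forall] at hac
      obtain ⟨v, c, hcyc⟩ := hac
      rw [not_not] at hcyc
      have hne : c.edges ≠ [] := by
        intro h
        have := hcyc.three_le_length
        have := c.length_edges
        simp [h] at this
        omega
      obtain ⟨e, hee⟩ := List.exists_mem_of_ne_nil _ hne
      have heE : e ∈ G.edgeSet := c.edges_subset_edgeSet hee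
      have hnb : ¬ G.IsBridge e := by
        intro hbr
        rw [isBridge_iff_mem_and_forall_cycle_notMem heE] at hbr
        exact hbr c hcyc hee
      classical
      letI : Fintype (G \ fromEdgeSet {e} : SimpleGraph V).edgeSet := Fintype.ofFinite _
      have hconn' := connected_delete G e heE hnb hc
      have hcard' : (G \ fromEdgeSet {e}).edgeFinset.card = m - 1 := by
        rw [edgeFinset_delete G e, Finset.card_erase_of_mem (by simpa [mem_edgeFinset] using heE), hcard]
      have hm : 1 ≤ m := by
        rw [← hcard]
        exact Finset.card_pos.mpr ⟨e, by simpa [mem_edgeFinset] using heE⟩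
      have := ih (m - 1) (by omega) _ inferInstance hconn' hcard'
      omega

lemma isTree_of_connected_card [Fintype V] [DecidableEq V] (G : SimpleGraph V)
    [Fintype G.edgeSet] (hc : G.Connected) (hcard : G.edgeFinset.card + 1 = Fintype.card V) :
    G.IsTree := by
  refine ⟨hc, ?_⟩
  by_contra hac
  simp only [IsAcyclic, not_forall] at hac
  obtain ⟨v, c, hcyc⟩ := hac
  rw [not_not] at hcyc
  have hne : c.edges ≠ [] := by
    intro h
    have := hcyc.three_le_length
    have := c.length_edges
    simp [h] at this
    omega
  obtain ⟨e, hee⟩ := List.exists_mem_of_ne_nil _ hne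
  have heE : e ∈ G.edgeSet := c.edges_subset_edgeSet hee
  have hnb : ¬ G.IsBridge e := by
    intro hbr
    rw [isBridge_iff_mem_and_forall_cycle_notMem heE] at hbr
    exact hbr c hcyc hee
  classical
  letI : Fintype (G \ fromEdgeSet {e} : SimpleGraph V).edgeSet := Fintype.ofFinite _
  have hconn' := connected_delete G e heE hnb hc
  have hcard' : (G \ fromEdgeSet {e}).edgeFinset.card = G.edgeFinset.card - 1 := by
    rw [edgeFinset_delete G e, Finset.card_erase_of_mem (by simpa [mem_edgeFinset] using heE)]
  have hm : 1 ≤ G.edgeFinset.card :=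
    Finset.card_pos.mpr ⟨e, by simpa [mem_edgeFinset] using heE⟩
  have := card_le_of_connected _ (G \ fromEdgeSet {e}) inferInstance hconn' hcard'
  omega
namespace LadderTree

open SimpleGraph

variable {n : ℕ}

lemma fin2_cases (r : Fin 2) : r = 0 ∨ r = 1 := by omega

/-- vertex constructor with clamping -/
def LV (n : ℕ) (c : ℕ) (r : Fin 2) : LadderV n := (⟨min c n, by omega⟩, r)

lemma LV_val (c : ℕ) (r : Fin 2) : (((LV n c r).1 : Fin (n+1)) : ℕ) = min c n := rfl

lemma LV_fst {c : ℕ} (h : c ≤ n) (r : Fin 2) : (((LV n c r).1 : Fin (n+1)) : ℕ) = c := by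
  simp only [LV_val]; omega

lemma LV_snd (c : ℕ) (r : Fin 2) : (LV n c r).2 = r := rfl

lemma eq_LV {u : LadderV n} {c : ℕ} (h : (u.1 : ℕ) = c) : u = LV n c u.2 := by
  cases u with
  | mk a r =>
    simp only [LV, Prod.mk.injEq]
    refine ⟨Fin.ext ?_, by trivial⟩
    simp only at h
    simp [← h]
    omega

lemma LV_eq_iff {c c' : ℕ} {r r' : Fin 2} (hc : c ≤ n) (hc' : c' ≤ n) :
    LV n c r = LV n c' r' ↔ c = c' ∧ r = r' := by
  constructor
  · intro h
    have h1 := congrArg (fun u : LadderV n => ((u.1 : Fin (n+1)) : ℕ)) h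
    have h2 := congrArg (fun u : LadderV n => u.2) h
    simp only [LV_fst hc, LV_fst hc'] at h1
    exact ⟨h1, h2⟩
  · rintro ⟨rfl, rfl⟩; rfl

/-- extended code value -/
def fe (f : Fin n → Fin 4) (j : ℕ) : ℕ := if h : j < n then (f ⟨j, h⟩ : ℕ) else 5

lemma fe_lt {f : Fin n → Fin 4} {j : ℕ} (h : j < n) : fe f j < 4 := by
  simp only [fe, dif_pos h]; exact (f ⟨j, h⟩).isLt

lemma fe_big {f : Fin n → Fin 4} {j : ℕ} (h : ¬ j < n) : fe f j = 5 := by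
  simp [fe, h]

def rowOK (f : Fin n → Fin 4) (r : Fin 2) (j : ℕ) : Prop :=
  if r = 0 then fe f j ≠ 3 else fe f j ≠ 2

def rungOK (f : Fin n → Fin 4) (k : ℕ) : Prop :=
  (k = n ∨ fe f k ≠ 1) ∧ (k = 0 ∨ fe f (k - 1) ≠ 0)

def TfAdj (f : Fin n → Fin 4) (u v : LadderV n) : Prop :=
  ((u.1 : ℕ) = (v.1 : ℕ) ∧ u.2 ≠ v.2 ∧ rungOK f (u.1 : ℕ)) ∨
    (u.2 = v.2 ∧ (((u.1 : ℕ) + 1 = (v.1 : ℕ) ∧ rowOK f u.2 (u.1 : ℕ)) ∨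
      ((v.1 : ℕ) + 1 = (u.1 : ℕ) ∧ rowOK f v.2 (v.1 : ℕ))))

def Tf (f : Fin n → Fin 4) : SimpleGraph (LadderV n) where
  Adj u v := TfAdj f u v
  symm := by
    constructor
    intro u v h
    rcases h with ⟨h1, h2, h3⟩ | ⟨h1, h2 | h2⟩
    · exact Or.inl ⟨h1.symm, fun hc => h2 hc.symm, h1 ▸ h3⟩
    · exact Or.inr ⟨h1.symm, Or.inr h2⟩
    · exact Or.inr ⟨h1.symm, Or.inl h2⟩
  loopless := by
    constructor
    intro u h
    rcases h with ⟨-, h2, -⟩ | ⟨-, h2 | h2⟩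
    · exact h2 rfl
    · omega
    · omega

lemma tf_adj {f : Fin n → Fin 4} {u v : LadderV n} : (Tf f).Adj u v ↔ TfAdj f u v := Iff.rfl

lemma tf_le_ladder (f : Fin n → Fin 4) : Tf f ≤ ladderGraph n := by
  intro u v h
  rcases h with ⟨h1, h2, -⟩ | ⟨h1, ⟨h2, -⟩ | ⟨h2, -⟩⟩
  · exact Or.inl ⟨Fin.ext h1, h2⟩
  · exact Or.inr ⟨h1, Or.inl h2⟩
  · exact Or.inr ⟨h1, Or.inr h2⟩

lemma ladder_adj_cases {u v : LadderV n} (h : (ladderGraph n).Adj u v) :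
    ((u.1 : ℕ) = (v.1 : ℕ) ∧ u.2 ≠ v.2) ∨
      ((u.1 : ℕ) + 1 = (v.1 : ℕ) ∧ u.2 = v.2) ∨ ((v.1 : ℕ) + 1 = (u.1 : ℕ) ∧ u.2 = v.2) := by
  rcases h with ⟨h1, h2⟩ | ⟨h1, h2 | h2⟩
  · exact Or.inl ⟨congrArg _ h1, h2⟩
  · exact Or.inr (Or.inl ⟨h2, h1⟩)
  · exact Or.inr (Or.inr ⟨h2, h1⟩)

lemma tf_low_iff {f : Fin n → Fin 4} {j : ℕ} (hj : j < n) :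
    (Tf f).Adj (LV n j 0) (LV n (j + 1) 0) ↔ fe f j ≠ 3 := by
  rw [tf_adj]
  unfold TfAdj
  rw [LV_fst (by omega) (0 : Fin 2), LV_fst (by omega) (0 : Fin 2), LV_snd, LV_snd]
  simp only [rowOK, if_pos rfl]
  constructor
  · rintro (⟨h1, -, -⟩ | ⟨-, ⟨-, h⟩ | ⟨h1, -⟩⟩)
    · omega
    · exact h
    · omega
  · intro h
    exact Or.inr ⟨by trivial, Or.inl ⟨by trivial, h⟩⟩

lemma tf_high_iff {f : Fin n → Fin 4} {j : ℕ} (hj : j < n) :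
    (Tf f).Adj (LV n j 1) (LV n (j + 1) 1) ↔ fe f j ≠ 2 := by
  rw [tf_adj]
  unfold TfAdj
  rw [LV_fst (by omega) (1 : Fin 2), LV_fst (by omega) (1 : Fin 2), LV_snd, LV_snd]
  simp only [rowOK, if_neg (by decide : ¬ (1 : Fin 2) = 0)]
  constructor
  · rintro (⟨h1, -, -⟩ | ⟨-, ⟨-, h⟩ | ⟨h1, -⟩⟩)
    · omega
    · exact h
    · omega
  · intro h
    exact Or.inr ⟨by trivial, Or.inl ⟨by trivial, h⟩⟩

lemma tf_rung_iff {f : Fin n → Fin 4} {k : ℕ} (hk : k ≤ n) :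
    (Tf f).Adj (LV n k 0) (LV n k 1) ↔ rungOK f k := by
  rw [tf_adj]
  unfold TfAdj
  rw [LV_fst hk (0 : Fin 2), LV_fst hk (1 : Fin 2), LV_snd, LV_snd]
  constructor
  · rintro (⟨-, -, h⟩ | ⟨h, -⟩)
    · exact h
    · exact absurd h (by decide)
  · intro h
    exact Or.inl ⟨by trivial, by decide, h⟩

section Connect

variable {f : Fin n → Fin 4}

/-- constraint in ℕ form -/
def Con (f : Fin n → Fin 4) : Prop := ∀ j : ℕ, ¬ (fe f j = 0 ∧ fe f (j + 1) = 1)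

lemma con_of (hf : ∀ (i : Fin n) (h : (i : ℕ) + 1 < n), ¬(f i = 0 ∧ f ⟨(i : ℕ) + 1, h⟩ = 1)) :
    Con f := by
  intro j ⟨h0, h1⟩
  by_cases hj : j < n
  · by_cases hj1 : j + 1 < n
    · refine hf ⟨j, hj⟩ hj1 ⟨?_, ?_⟩
      · have := h0; simp only [fe, dif_pos hj] at this
        exact Fin.ext (by simpa using this)
      · have := h1; simp only [fe, dif_pos hj1] at this
        exact Fin.ext (by simpa using this)
    · rw [fe_big hj1] at h1; omega
  · rw [fe_big hj] at h0; omega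

lemma C1 (hcon : Con f) : ∀ d k, k + d = n → (k = 0 ∨ fe f (k - 1) ≠ 0) →
    (Tf f).Reachable (LV n k 0) (LV n k 1) := by
  intro d
  induction d with
  | zero =>
    intro k hk hc
    exact ((tf_rung_iff (by omega)).mpr ⟨Or.inl (by omega), hc⟩).reachable
  | succ d ih =>
    intro k hk hc
    by_cases h1 : fe f k = 1
    · have hlow : (Tf f).Adj (LV n k 0) (LV n (k + 1) 0) := (tf_low_iff (by omega)).mpr (by omega)
      have hhigh : (Tf f).Adj (LV n k 1) (LV n (k + 1) 1) := (tf_high_iff (by omega)).mpr (by omega)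
      have hmid := ih (k + 1) (by omega) (by right; simpa using by omega)
      exact (hlow.reachable.trans hmid).trans hhigh.reachable.symm
    · exact ((tf_rung_iff (by omega)).mpr ⟨Or.inr h1, hc⟩).reachable

lemma C2 (hcon : Con f) : ∀ k, k ≤ n → ∀ r : Fin 2, (Tf f).Reachable (LV n k r) (LV n 0 0) := by
  intro k
  induction k with
  | zero =>
    intro _ r
    rcases fin2_cases r with rfl | rfl
    · exact Reachable.refl _
    · exact (C1 hcon n 0 (by omega) (Or.inl rfl)).symm
  | succ k ih =>
    intro hk r
    have hk' : k < n := by omega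
    rcases fin2_cases r with rfl | rfl
    · by_cases h3 : fe f k = 3
      · have hc1 := C1 hcon (n - (k + 1)) (k + 1) (by omega) (by right; simpa using by omega)
        have hhigh : (Tf f).Adj (LV n k 1) (LV n (k + 1) 1) := (tf_high_iff hk').mpr (by omega)
        exact (hc1.trans hhigh.reachable.symm).trans (ih (by omega) 1)
      · have hlow : (Tf f).Adj (LV n k 0) (LV n (k + 1) 0) := (tf_low_iff hk').mpr h3
        exact hlow.reachable.symm.trans (ih (by omega) 0)
    · by_cases h2 : fe f k = 2
      · have hc1 := C1 hcon (n - (k + 1)) (k + 1) (by omega) (by right; simpa using by omega)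
        have hlow : (Tf f).Adj (LV n k 0) (LV n (k + 1) 0) := (tf_low_iff hk').mpr (by omega)
        exact (hc1.symm.trans hlow.reachable.symm).trans (ih (by omega) 0)
      · have hhigh : (Tf f).Adj (LV n k 1) (LV n (k + 1) 1) := (tf_high_iff hk').mpr h2
        exact hhigh.reachable.symm.trans (ih (by omega) 1)

lemma tf_connected (hcon : Con f) : (Tf f).Connected := by
  have : Nonempty (LadderV n) := ⟨LV n 0 0⟩
  refine Connected.mk fun u v => ?_
  have hu := C2 hcon (u.1 : ℕ) (by omega) u.2
  have hv := C2 hcon (v.1 : ℕ) (by omega) v.2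
  rw [← eq_LV (rfl)] at hu hv
  exact hu.trans hv.symm

end Connect

section Count

open scoped Classical

variable {f : Fin n → Fin 4}

lemma fe_fin (f : Fin n → Fin 4) (i : Fin n) : fe f (i : ℕ) = (f i : ℕ) := by
  simp only [fe, dif_pos i.isLt, Fin.eta]

lemma LV_eq_of {w : LadderV n} {c : ℕ} {r : Fin 2} (h1 : ((w.1 : Fin (n+1)) : ℕ) = c)
    (h2 : w.2 = r) : LV n c r = w := by
  rw [← h1, ← h2]; exact (eq_LV rfl).symm

lemma edgeLow_eq (i : Fin n) : edgeLow n i = s(LV n (i : ℕ) 0, LV n ((i : ℕ) + 1) 0) := by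
  unfold edgeLow
  apply congrArg₂ (fun a b : LadderV n => s(a, b))
  · exact (LV_eq_of (by simp) rfl).symm
  · exact (LV_eq_of (by simp) rfl).symm

lemma edgeHigh_eq (i : Fin n) : edgeHigh n i = s(LV n (i : ℕ) 1, LV n ((i : ℕ) + 1) 1) := by
  unfold edgeHigh
  apply congrArg₂ (fun a b : LadderV n => s(a, b))
  · exact (LV_eq_of (by simp) rfl).symm
  · exact (LV_eq_of (by simp) rfl).symm

lemma edgeRung_eq (k : Fin (n + 1)) : edgeRung n k = s(LV n (k : ℕ) 0, LV n (k : ℕ) 1) := by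
  unfold edgeRung
  apply congrArg₂ (fun a b : LadderV n => s(a, b))
  · exact (LV_eq_of (by simp) rfl).symm
  · exact (LV_eq_of (by simp) rfl).symm

noncomputable def lowsF (f : Fin n → Fin 4) : Finset (Sym2 (LadderV n)) :=
  (Finset.univ.filter (fun i : Fin n => fe f (i : ℕ) ≠ 3)).image (edgeLow n)

noncomputable def highsF (f : Fin n → Fin 4) : Finset (Sym2 (LadderV n)) :=
  (Finset.univ.filter (fun i : Fin n => fe f (i : ℕ) ≠ 2)).image (edgeHigh n)

noncomputable def rungsF (f : Fin n → Fin 4) : Finset (Sym2 (LadderV n)) :=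
  (Finset.univ.filter (fun k : Fin (n + 1) => rungOK f (k : ℕ))).image (edgeRung n)

lemma tf_edgeFinset (f : Fin n → Fin 4) :
    (Tf f).edgeFinset = lowsF f ∪ highsF f ∪ rungsF f := by
  ext e
  induction e with
  | _ u v =>
    simp only [SimpleGraph.mem_edgeFinset, SimpleGraph.mem_edgeSet, Finset.mem_union,
      lowsF, highsF, rungsF, Finset.mem_image, Finset.mem_filter, Finset.mem_univ, true_and]
    constructor
    · intro h
      rcases h with ⟨h1, h2, h3⟩ | ⟨h1, ⟨h2, h3⟩ | ⟨h2, h3⟩⟩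
      · right
        refine ⟨u.1, h3, ?_⟩
        rw [edgeRung_eq]
        rcases fin2_cases u.2 with hu2 | hu2
        · have hv2 : v.2 = 1 := by
            rcases fin2_cases v.2 with h | h
            · exact absurd (hu2.trans h.symm) h2
            · exact h
          rw [LV_eq_of rfl hu2, LV_eq_of h1.symm hv2]
        · have hv2 : v.2 = 0 := by
            rcases fin2_cases v.2 with h | h
            · exact h
            · exact absurd (hu2.trans h.symm) h2
          rw [LV_eq_of rfl hu2, LV_eq_of h1.symm hv2, Sym2.eq_swap]
      · -- u.1 + 1 = v.1, same row
        have hun : (u.1 : ℕ) < n := by omega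
        rcases fin2_cases u.2 with hu2 | hu2
        · left; left
          refine ⟨⟨(u.1 : ℕ), hun⟩, ?_, ?_⟩
          · show fe f ((u.1:ℕ)) ≠ 3
            rw [rowOK, hu2, if_pos rfl] at h3; exact h3
          · rw [edgeLow_eq]
            rw [show ((⟨(u.1:ℕ), hun⟩ : Fin n) : ℕ) = (u.1:ℕ) from rfl,
              LV_eq_of rfl hu2, LV_eq_of (by omega) (h1.symm.trans hu2)]
        · left; right
          refine ⟨⟨(u.1 : ℕ), hun⟩, ?_, ?_⟩
          · show fe f ((u.1:ℕ)) ≠ 2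
            rw [rowOK, hu2, if_neg (by decide)] at h3; exact h3
          · rw [edgeHigh_eq]
            rw [show ((⟨(u.1:ℕ), hun⟩ : Fin n) : ℕ) = (u.1:ℕ) from rfl,
              LV_eq_of rfl hu2, LV_eq_of (by omega) (h1.symm.trans hu2)]
      · -- v.1 + 1 = u.1
        have hvn : (v.1 : ℕ) < n := by omega
        rcases fin2_cases v.2 with hv2 | hv2
        · left; left
          refine ⟨⟨(v.1 : ℕ), hvn⟩, ?_, ?_⟩
          · show fe f ((v.1:ℕ)) ≠ 3
            rw [rowOK, hv2, if_pos rfl] at h3; exact h3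
          · rw [edgeLow_eq]
            rw [show ((⟨(v.1:ℕ), hvn⟩ : Fin n) : ℕ) = (v.1:ℕ) from rfl,
              LV_eq_of rfl hv2, LV_eq_of (by omega) (h1.trans hv2), Sym2.eq_swap]
        · left; right
          refine ⟨⟨(v.1 : ℕ), hvn⟩, ?_, ?_⟩
          · show fe f ((v.1:ℕ)) ≠ 2
            rw [rowOK, hv2, if_neg (by decide)] at h3; exact h3
          · rw [edgeHigh_eq]
            rw [show ((⟨(v.1:ℕ), hvn⟩ : Fin n) : ℕ) = (v.1:ℕ) from rfl,
              LV_eq_of rfl hv2, LV_eq_of (by omega) (h1.trans hv2), Sym2.eq_swap]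
    · rintro ((⟨i, hi, he⟩ | ⟨i, hi, he⟩) | ⟨k, hk, he⟩)
      · rw [edgeLow_eq] at he
        rw [← SimpleGraph.mem_edgeSet, ← he, SimpleGraph.mem_edgeSet]
        exact (tf_low_iff i.isLt).mpr hi
      · rw [edgeHigh_eq] at he
        rw [← SimpleGraph.mem_edgeSet, ← he, SimpleGraph.mem_edgeSet]
        exact (tf_high_iff i.isLt).mpr hi
      · rw [edgeRung_eq] at he
        rw [← SimpleGraph.mem_edgeSet, ← he, SimpleGraph.mem_edgeSet]
        exact (tf_rung_iff (by omega)).mpr hk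

end Count

section Count2

open scoped Classical

variable {f : Fin n → Fin 4}

lemma lows_card : (lowsF f).card = (Finset.univ.filter (fun i : Fin n => fe f (i : ℕ) ≠ 3)).card := by
  apply Finset.card_image_of_injective
  intro i j h
  have hi := i.isLt
  have hj := j.isLt
  rw [edgeLow_eq, edgeLow_eq, Sym2.eq_iff] at h
  rcases h with ⟨h1, h2⟩ | ⟨h1, h2⟩ <;>
  · rw [LV_eq_iff (by omega) (by omega)] at h1
    rw [LV_eq_iff (by omega) (by omega)] at h2
    exact Fin.ext (by omega)

lemma highs_card : (highsF f).card = (Finset.univ.filter (fun i : Fin n => fe f (i : ℕ) ≠ 2)).card := by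
  apply Finset.card_image_of_injective
  intro i j h
  have hi := i.isLt
  have hj := j.isLt
  rw [edgeHigh_eq, edgeHigh_eq, Sym2.eq_iff] at h
  rcases h with ⟨h1, h2⟩ | ⟨h1, h2⟩ <;>
  · rw [LV_eq_iff (by omega) (by omega)] at h1
    rw [LV_eq_iff (by omega) (by omega)] at h2
    exact Fin.ext (by omega)

lemma rungs_card : (rungsF f).card = (Finset.univ.filter (fun k : Fin (n + 1) => rungOK f (k : ℕ))).card := by
  apply Finset.card_image_of_injective
  intro i j h
  rw [edgeRung_eq, edgeRung_eq, Sym2.eq_iff] at h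
  rcases h with ⟨h1, h2⟩ | ⟨h1, h2⟩
  · rw [LV_eq_iff (by omega) (by omega)] at h1
    exact Fin.ext (by omega)
  · rw [LV_eq_iff (by omega) (by omega)] at h1
    exact absurd h1.2 (by decide)

lemma lows_highs_disj : Disjoint (lowsF f) (highsF f) := by
  rw [Finset.disjoint_left]
  rintro e he1 he2
  simp only [lowsF, highsF, Finset.mem_image] at he1 he2
  obtain ⟨i, -, hi⟩ := he1
  obtain ⟨j, -, hj⟩ := he2
  rw [edgeLow_eq] at hi
  rw [edgeHigh_eq] at hj
  rw [← hj, Sym2.eq_iff] at hi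
  rcases hi with ⟨h1, -⟩ | ⟨h1, -⟩ <;>
  · rw [LV_eq_iff (by omega) (by omega)] at h1
    exact absurd h1.2 (by decide)

lemma lh_rungs_disj : Disjoint (lowsF f ∪ highsF f) (rungsF f) := by
  rw [Finset.disjoint_left]
  rintro e he1 he2
  simp only [lowsF, highsF, rungsF, Finset.mem_union, Finset.mem_image] at he1 he2
  obtain ⟨k, -, hk⟩ := he2
  rw [edgeRung_eq] at hk
  rcases he1 with ⟨i, -, hi⟩ | ⟨i, -, hi⟩
  · rw [edgeLow_eq] at hi
    rw [← hk, Sym2.eq_iff] at hi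
    rcases hi with ⟨h1, h2⟩ | ⟨h1, h2⟩
    · rw [LV_eq_iff (by omega) (by omega)] at h2
      exact absurd h2.2 (by decide)
    · rw [LV_eq_iff (by omega) (by omega)] at h1
      exact absurd h1.2 (by decide)
  · rw [edgeHigh_eq] at hi
    rw [← hk, Sym2.eq_iff] at hi
    rcases hi with ⟨h1, h2⟩ | ⟨h1, h2⟩
    · rw [LV_eq_iff (by omega) (by omega)] at h1
      exact absurd h1.2 (by decide)
    · rw [LV_eq_iff (by omega) (by omega)] at h2
      exact absurd h2.2 (by decide)

lemma rungs_count (hcon : Con f) :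
    (Finset.univ.filter (fun k : Fin (n + 1) => rungOK f (k : ℕ))).card + (n + 1) =
      ((Finset.univ.filter (fun i : Fin n => fe f (i : ℕ) ≠ 1)).card + 1) +
        ((Finset.univ.filter (fun i : Fin n => fe f (i : ℕ) ≠ 0)).card + 1) := by
  have key : ∀ k : Fin (n + 1),
      ((if rungOK f (k : ℕ) then 1 else 0) : ℕ) + 1 =
        (if ((k : ℕ) = n ∨ fe f (k : ℕ) ≠ 1) then 1 else 0) +
          (if ((k : ℕ) = 0 ∨ fe f ((k : ℕ) - 1) ≠ 0) then 1 else 0) := by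
    intro k
    have hcc := hcon ((k : ℕ) - 1)
    by_cases hA : ((k : ℕ) = n ∨ fe f (k : ℕ) ≠ 1) <;>
      by_cases hB : ((k : ℕ) = 0 ∨ fe f ((k : ℕ) - 1) ≠ 0)
    · have hAB : rungOK f (k : ℕ) := ⟨hA, hB⟩
      rw [if_pos hAB, if_pos hA, if_pos hB]
    · have hAB : ¬ rungOK f (k : ℕ) := fun h => hB h.2
      rw [if_neg hAB, if_pos hA, if_neg hB]
    · have hAB : ¬ rungOK f (k : ℕ) := fun h => hA h.1
      rw [if_neg hAB, if_neg hA, if_pos hB]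
    · exfalso
      push_neg at hA hB
      have hk1 : (k : ℕ) - 1 + 1 = (k : ℕ) := by omega
      rw [hk1] at hcc
      exact hcc ⟨hB.2, hA.2⟩
  have hsum := Finset.sum_congr rfl (fun k (_ : k ∈ Finset.univ) => key k)
  rw [Finset.sum_add_distrib, Finset.sum_add_distrib] at hsum
  rw [Finset.sum_const, Finset.card_univ, Fintype.card_fin, smul_eq_mul, mul_one] at hsum
  rw [← Finset.card_filter, ← Finset.card_filter, ← Finset.card_filter] at hsum
  rw [hsum]
  congr 1
  · -- first sum: split off last
    have : (Finset.univ.filter (fun k : Fin (n + 1) => (k : ℕ) = n ∨ fe f (k : ℕ) ≠ 1)).card =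
        (Finset.univ.filter (fun i : Fin n => fe f (i : ℕ) ≠ 1)).card + 1 := by
      rw [Finset.card_filter, Finset.card_filter, Fin.sum_univ_castSucc]
      congr 1
      · apply Finset.sum_congr rfl
        intro i _
        have h1 : ((i.castSucc : Fin (n + 1)) : ℕ) = (i : ℕ) := rfl
        rw [h1]
        have : (((i : ℕ) = n ∨ fe f (i : ℕ) ≠ 1)) ↔ fe f (i : ℕ) ≠ 1 := by
          constructor
          · rintro (h | h)
            · omega
            · exact h
          · exact Or.inr
        rw [if_congr this rfl rfl]
      · have hl : ((Fin.last n : Fin (n + 1)) : ℕ) = n := by simp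
        rw [if_pos (Or.inl hl)]
    exact this
  · have : (Finset.univ.filter (fun k : Fin (n + 1) => (k : ℕ) = 0 ∨ fe f ((k : ℕ) - 1) ≠ 0)).card =
        (Finset.univ.filter (fun i : Fin n => fe f (i : ℕ) ≠ 0)).card + 1 := by
      rw [Finset.card_filter, Finset.card_filter, Fin.sum_univ_succ]
      have h0 : ((0 : Fin (n + 1)) : ℕ) = 0 := rfl
      rw [if_pos (Or.inl h0), add_comm]
      congr 1
      apply Finset.sum_congr rfl
      intro i _
      have h1 : ((i.succ : Fin (n + 1)) : ℕ) = (i : ℕ) + 1 := rfl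
      rw [h1]
      have : (((i : ℕ) + 1 = 0 ∨ fe f ((i : ℕ) + 1 - 1) ≠ 0)) ↔ fe f (i : ℕ) ≠ 0 := by
        constructor
        · rintro (h | h)
          · omega
          · simpa using h
        · intro h; right; simpa using h
      rw [if_congr this rfl rfl]
    exact this

lemma tf_card (hcon : Con f) : (Tf f).edgeFinset.card = 2 * n + 1 := by
  rw [tf_edgeFinset]
  rw [Finset.card_union_of_disjoint lh_rungs_disj, Finset.card_union_of_disjoint lows_highs_disj]
  rw [lows_card, highs_card, rungs_card]
  have h4 : ∀ i : Fin n,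
      ((if fe f (i : ℕ) ≠ 3 then 1 else 0) : ℕ) + (if fe f (i : ℕ) ≠ 2 then 1 else 0) +
        ((if fe f (i : ℕ) ≠ 1 then 1 else 0) + (if fe f (i : ℕ) ≠ 0 then 1 else 0)) = 3 := by
    intro i
    have := fe_lt (f := f) i.isLt
    have h0 : fe f (i : ℕ) = 0 ∨ fe f (i : ℕ) = 1 ∨ fe f (i : ℕ) = 2 ∨ fe f (i : ℕ) = 3 := by omega
    rcases h0 with h | h | h | h <;> simp [h]
  have hsum := Finset.sum_congr rfl (fun i (_ : i ∈ (Finset.univ : Finset (Fin n))) => h4 i)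
  rw [Finset.sum_add_distrib, Finset.sum_add_distrib, Finset.sum_add_distrib] at hsum
  rw [Finset.sum_const, Finset.card_univ, Fintype.card_fin, smul_eq_mul, mul_comm] at hsum
  rw [← Finset.card_filter, ← Finset.card_filter, ← Finset.card_filter, ← Finset.card_filter] at hsum
  have hr := rungs_count hcon
  omega

end Count2

section TreePack

open scoped Classical

variable {f : Fin n → Fin 4}

lemma tf_isTree (hcon : Con f) : (Tf f).IsTree := by
  apply isTree_of_connected_card _ (tf_connected hcon)
  rw [tf_card hcon]
  simp only [LadderV, Fintype.card_prod, Fintype.card_fin]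
  omega

lemma tf_inj {f g : Fin n → Fin 4} (hcf : Con f) (hcg : Con g) (h : Tf f = Tf g) : f = g := by
  have hiff : ∀ u v, (Tf f).Adj u v ↔ (Tf g).Adj u v := fun u v => by rw [h]
  have key : ∀ j, ∀ hj : j < n, fe f j = fe g j := by
    intro j
    induction j using Nat.strong_induction_on with
    | _ j ih =>
      intro hj
      have hlow := (hiff (LV n j 0) (LV n (j + 1) 0))
      rw [tf_low_iff hj, tf_low_iff hj] at hlow
      have hhigh := (hiff (LV n j 1) (LV n (j + 1) 1))
      rw [tf_high_iff hj, tf_high_iff hj] at hhigh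
      have hrung := (hiff (LV n j 0) (LV n j 1))
      rw [tf_rung_iff (le_of_lt hj), tf_rung_iff (le_of_lt hj)] at hrung
      have haf := fe_lt (f := f) hj
      have hag := fe_lt (f := g) hj
      by_cases h3 : fe f j = 3
      · omega
      · by_cases h2 : fe f j = 2
        · omega
        · -- fe f j ∈ {0,1}, and also fe g j ∈ {0,1}
          have hg3 : fe g j ≠ 3 := by omega
          have hg2 : fe g j ≠ 2 := by omega
          simp only [rungOK] at hrung
          rcases Nat.eq_zero_or_pos j with rfl | hjpos
          · -- j = 0
            have : (0 = n ∨ fe f 0 ≠ 1) ∧ (0 = 0 ∨ True) ↔ (0 = n ∨ fe g 0 ≠ 1) ∧ (0 = 0 ∨ True) := by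
              constructor
              · intro hh
                exact ⟨(hrung.mp ⟨hh.1, Or.inl rfl⟩).1, Or.inl rfl⟩
              · intro hh
                exact ⟨(hrung.mpr ⟨hh.1, Or.inl rfl⟩).1, Or.inl rfl⟩
            omega
          · have hprev := ih (j - 1) (by omega) (by omega)
            have hcf' := hcf (j - 1)
            have hcg' := hcg (j - 1)
            have hj1 : j - 1 + 1 = j := by omega
            rw [hj1] at hcf' hcg'
            by_cases hc : fe f (j - 1) = 0
            · omega
            · -- rung iff decides
              have hru : rungOK f j ↔ rungOK g j := hrung
              simp only [rungOK] at hru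
              have hjn : j ≠ n := by omega
              omega
  funext i
  have := key (i : ℕ) i.isLt
  rw [fe_fin, fe_fin] at this
  exact Fin.ext (by omega)

end TreePack

section Encode

open scoped Classical

variable (H : SimpleGraph (LadderV n))

def Hge (m : ℕ) : SimpleGraph (LadderV n) where
  Adj u v := H.Adj u v ∧ m ≤ (u.1 : ℕ) ∧ m ≤ (v.1 : ℕ)
  symm := ⟨fun u v ⟨h1, h2, h3⟩ => ⟨h1.symm, h3, h2⟩⟩
  loopless := ⟨fun u h => H.loopless.irrefl u h.1⟩

lemma hge_zero : Hge H 0 = H := by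
  ext u v
  exact ⟨fun h => h.1, fun h => ⟨h, Nat.zero_le _, Nat.zero_le _⟩⟩

lemma hge_reach_col {m : ℕ} {x y : LadderV n} (h : (Hge H m).Reachable x y)
    (hx : m ≤ (x.1 : ℕ)) : m ≤ (y.1 : ℕ) := by
  obtain ⟨w⟩ := h
  induction w with
  | nil => exact hx
  | cons h p ih => exact ih h.2.2

def lowMem (j : ℕ) : Prop := H.Adj (LV n j 0) (LV n (j + 1) 0)
def highMem (j : ℕ) : Prop := H.Adj (LV n j 1) (LV n (j + 1) 1)
def rungMem (k : ℕ) : Prop := H.Adj (LV n k 0) (LV n k 1)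

lemma peel (hlad : H ≤ ladderGraph n) {m : ℕ} (hm : ¬ rungMem H m) :
    ∀ (L : ℕ) (u v : LadderV n) (w : (Hge H m).Walk u v), w.length ≤ L →
      m + 1 ≤ (u.1 : ℕ) → m + 1 ≤ (v.1 : ℕ) → (Hge H (m + 1)).Reachable u v := by
  intro L
  induction L with
  | zero =>
    intro u v w hw hu hv
    cases w with
    | nil => exact SimpleGraph.Reachable.refl _
    | cons h p => simp [SimpleGraph.Walk.length_cons] at hw
  | succ L ihL =>
    intro u v w hw hu hv
    cases w with
    | nil => exact SimpleGraph.Reachable.refl _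
    | cons h p =>
      rename_i b
      rw [SimpleGraph.Walk.length_cons] at hw
      by_cases hb : m + 1 ≤ (b.1 : ℕ)
      · exact SimpleGraph.Reachable.trans (SimpleGraph.Adj.reachable ⟨h.1, hu, hb⟩)
          (ihL _ _ p (by omega) hb hv)
      · have hbm : (b.1 : ℕ) = m := by have := h.2.2; omega
        have hcase := ladder_adj_cases (hlad h.1)
        have hrow : u.2 = b.2 ∧ (u.1 : ℕ) = m + 1 := by
          rcases hcase with ⟨h1, -⟩ | ⟨h1, h2⟩ | ⟨h1, h2⟩
          · omega
          · omega
          · exact ⟨h2, by omega⟩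
        cases p with
        | nil => exact absurd hv (by omega)
        | cons h2 q =>
          rename_i c
          have hc2 := ladder_adj_cases (hlad h2.1)
          have hcc : m ≤ (c.1 : ℕ) := h2.2.2
          have hcu : c = u := by
            rcases hc2 with ⟨h3, h4⟩ | ⟨h3, h4⟩ | ⟨h3, h4⟩
            · -- rung at column m: contradiction
              exfalso
              apply hm
              rcases fin2_cases b.2 with hb2 | hb2
              · have hc2' : c.2 = 1 := by
                  rcases fin2_cases c.2 with h | h
                  · exact absurd (hb2.trans h.symm) h4
                  · exact h
                show H.Adj (LV n m 0) (LV n m 1)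
                rw [LV_eq_of hbm hb2, LV_eq_of (show ((c.1 : Fin (n+1)) : ℕ) = m by omega) hc2']
                exact h2.1
              · have hc2' : c.2 = 0 := by
                  rcases fin2_cases c.2 with h | h
                  · exact h
                  · exact absurd (hb2.trans h.symm) h4
                show H.Adj (LV n m 0) (LV n m 1)
                rw [LV_eq_of (show ((c.1 : Fin (n+1)) : ℕ) = m by omega) hc2', LV_eq_of hbm hb2]
                exact h2.1.symm
            · -- c.1 = m + 1, same row: c = u
              have hcm : (c.1 : ℕ) = m + 1 := by omega
              exact (eq_LV hcm).trans
                (((congrArg (LV n (m + 1)) (h4.symm.trans hrow.1.symm)).trans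
                  (eq_LV hrow.2).symm))
            · omega
          rw [SimpleGraph.Walk.length_cons] at hw
          subst hcu
          exact ihL _ _ q (by omega) hu hv

lemma F1 (hconn : H.Connected) (hlad : H ≤ ladderGraph n) {j : ℕ} (hj : j < n) :
    lowMem H j ∨ highMem H j := by
  obtain ⟨a, b, hab, ha, hb⟩ := cross_lemma H {u : LadderV n | (u.1 : ℕ) ≤ j}
    (hconn.preconnected (LV n 0 0) (LV n (j + 1) 0))
    (by simp [Set.mem_setOf_eq, LV_fst (Nat.zero_le n)])
    (by simp [Set.mem_setOf_eq, LV_fst (by omega : j + 1 ≤ n)])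
  simp only [Set.mem_setOf_eq, not_le] at ha hb
  rcases ladder_adj_cases (hlad hab) with ⟨h1, -⟩ | ⟨h1, h2⟩ | ⟨h1, h2⟩
  · omega
  · have haj : (a.1 : ℕ) = j := by omega
    rcases fin2_cases a.2 with ha2 | ha2
    · left
      show H.Adj (LV n j 0) (LV n (j + 1) 0)
      rw [LV_eq_of haj ha2,
        LV_eq_of (show ((b.1 : Fin (n+1)) : ℕ) = j + 1 by omega) (h2.symm.trans ha2)]
      exact hab
    · right
      show H.Adj (LV n j 1) (LV n (j + 1) 1)
      rw [LV_eq_of haj ha2,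
        LV_eq_of (show ((b.1 : Fin (n+1)) : ℕ) = j + 1 by omega) (h2.symm.trans ha2)]
      exact hab
  · omega

lemma split_cut (hconn : H.Connected) (hlad : H ≤ ladderGraph n) {k : ℕ} (hk : k + 1 ≤ n)
    (hsplit : ¬ (Hge H (k + 1)).Reachable (LV n (k + 1) 0) (LV n (k + 1) 1)) :
    lowMem H k ∧ highMem H k := by
  have main : ∀ r s : Fin 2, r ≠ s →
      ¬ (Hge H (k + 1)).Reachable (LV n (k + 1) r) (LV n (k + 1) s) →
      H.Adj (LV n k r) (LV n (k + 1) r) := by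
    intro r s hrs hns
    obtain ⟨a, b, hab, ha, hb⟩ := cross_lemma H
      {u : LadderV n | (Hge H (k + 1)).Reachable (LV n (k + 1) r) u}
      (hconn.preconnected (LV n (k + 1) r) (LV n (k + 1) s))
      (SimpleGraph.Reachable.refl _) hns
    simp only [Set.mem_setOf_eq] at ha hb
    have hacol : k + 1 ≤ (a.1 : ℕ) := hge_reach_col H ha (by rw [LV_fst hk])
    have hbcol : ¬ (k + 1 ≤ (b.1 : ℕ)) := by
      intro hbc
      exact hb (ha.trans (SimpleGraph.Adj.reachable ⟨hab, hacol, hbc⟩))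
    rcases ladder_adj_cases (hlad hab) with ⟨h1, -⟩ | ⟨h1, h2⟩ | ⟨h1, h2⟩
    · omega
    · omega
    · -- b.1 + 1 = a.1, so a.1 = k+1, b.1 = k
      have ha1 : (a.1 : ℕ) = k + 1 := by omega
      have hb1 : (b.1 : ℕ) = k := by omega
      have ha2 : a.2 = r := by
        by_contra hne
        apply hns
        have has : a.2 = s := by
          rcases fin2_cases a.2 with h | h <;> rcases fin2_cases r with h' | h' <;>
            rcases fin2_cases s with h'' | h'' <;> simp_all
        rw [LV_eq_of ha1 has]
        exact ha
      have hb2 : b.2 = r := h2.symm.trans ha2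
      show H.Adj (LV n k r) (LV n (k + 1) r)
      rw [LV_eq_of hb1 hb2, LV_eq_of ha1 ha2]
      exact hab.symm
  exact ⟨main 0 1 (by decide) hsplit, main 1 0 (by decide) (fun hh => hsplit hh.symm)⟩

end Encode

section Encode2

open scoped Classical

variable (H : SimpleGraph (LadderV n))

noncomputable def enc : ℕ → ℕ
  | 0 => if ¬ lowMem H 0 then 3 else if ¬ highMem H 0 then 2 else
      if rungMem H 0 then 0 else 1
  | (j + 1) => if ¬ lowMem H (j + 1) then 3 else if ¬ highMem H (j + 1) then 2 else
      if rungMem H (j + 1) ∨ enc j = 0 then 0 else 1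

lemma enc_eq (j : ℕ) : enc H j =
    if ¬ lowMem H j then 3 else if ¬ highMem H j then 2 else
      if rungMem H j ∨ (0 < j ∧ enc H (j - 1) = 0) then 0 else 1 := by
  cases j with
  | zero =>
    show (if ¬ lowMem H 0 then 3 else if ¬ highMem H 0 then 2 else
      if rungMem H 0 then 0 else 1) = _
    simp
  | succ j =>
    show (if ¬ lowMem H (j + 1) then 3 else if ¬ highMem H (j + 1) then 2 else
      if rungMem H (j + 1) ∨ enc H j = 0 then 0 else 1) = _
    simp

lemma enc_lt4 (j : ℕ) : enc H j < 4 := by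
  rw [enc_eq]
  split_ifs <;> omega

lemma enc_ne3 {j : ℕ} (h : enc H j ≠ 3) : lowMem H j := by
  rw [enc_eq] at h
  by_contra hl
  rw [if_pos hl] at h
  exact h rfl

lemma enc_ne2 (hlh : lowMem H j ∨ highMem H j) (h : enc H j ≠ 2) : highMem H j := by
  rw [enc_eq] at h
  by_cases hl : lowMem H j
  · by_contra hh
    rw [if_neg (not_not_intro hl), if_pos hh] at h
    exact h rfl
  · exact (hlh.resolve_left hl)

lemma enc_zero {j : ℕ} (h : enc H j = 0) :
    lowMem H j ∧ highMem H j ∧ (rungMem H j ∨ (0 < j ∧ enc H (j - 1) = 0)) := by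
  rw [enc_eq] at h
  by_cases hl : lowMem H j
  · by_cases hh : highMem H j
    · rw [if_neg (not_not_intro hl), if_neg (not_not_intro hh)] at h
      refine ⟨hl, hh, ?_⟩
      by_contra hc
      rw [if_neg hc] at h
      exact one_ne_zero h
    · rw [if_neg (not_not_intro hl), if_pos hh] at h
      omega
  · rw [if_pos hl] at h
    omega

lemma enc_one {j : ℕ} (h : enc H j = 1) :
    lowMem H j ∧ highMem H j ∧ ¬ rungMem H j ∧ ¬ (0 < j ∧ enc H (j - 1) = 0) := by
  rw [enc_eq] at h
  by_cases hl : lowMem H j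
  · by_cases hh : highMem H j
    · rw [if_neg (not_not_intro hl), if_neg (not_not_intro hh)] at h
      by_cases hc : rungMem H j ∨ (0 < j ∧ enc H (j - 1) = 0)
      · rw [if_pos hc] at h; omega
      · push_neg at hc
        exact ⟨hl, hh, hc.1, by push_neg; intro hp; exact hc.2 hp⟩
    · rw [if_neg (not_not_intro hl), if_pos hh] at h
      omega
  · rw [if_pos hl] at h
    omega

lemma enc_of_lowhigh {j : ℕ} (hl : lowMem H j) (hh : highMem H j) :
    enc H j = 0 ∨ enc H j = 1 := by
  rw [enc_eq, if_neg (not_not_intro hl), if_neg (not_not_intro hh)]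
  by_cases hc : rungMem H j ∨ (0 < j ∧ enc H (j - 1) = 0)
  · rw [if_pos hc]; exact Or.inl rfl
  · rw [if_neg hc]; exact Or.inr rfl

lemma split_prop (hconn : H.Connected) (hlad : H ≤ ladderGraph n) :
    ∀ k, k ≤ n → ¬ (Hge H k).Reachable (LV n k 0) (LV n k 1) → 0 < k ∧ enc H (k - 1) = 0 := by
  intro k
  induction k with
  | zero =>
    intro _ hsplit
    rw [hge_zero] at hsplit
    exact absurd (hconn.preconnected _ _) hsplit
  | succ k ih =>
    intro hk hsplit
    refine ⟨Nat.succ_pos _, ?_⟩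
    simp only [Nat.add_sub_cancel]
    obtain ⟨hlow, hhigh⟩ := split_cut H hconn hlad hk hsplit
    rw [enc_eq, if_neg (not_not_intro hlow), if_neg (not_not_intro hhigh)]
    rw [if_pos]
    by_contra hno
    push_neg at hno
    have hsplitk : ¬ (Hge H k).Reachable (LV n k 0) (LV n k 1) := by
      intro hreach
      apply hsplit
      have hadj1 : (Hge H k).Adj (LV n (k + 1) 0) (LV n k 0) := by
        refine ⟨hlow.symm, ?_, ?_⟩
        · rw [LV_fst hk]; omega
        · rw [LV_fst (by omega)]
      have hadj2 : (Hge H k).Adj (LV n k 1) (LV n (k + 1) 1) := by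
        refine ⟨hhigh, ?_, ?_⟩
        · rw [LV_fst (by omega)]
        · rw [LV_fst hk]; omega
      have r1 : (Hge H k).Reachable (LV n (k + 1) 0) (LV n (k + 1) 1) :=
        (hadj1.reachable.trans hreach).trans hadj2.reachable
      obtain ⟨w⟩ := r1
      exact peel H hlad hno.1 w.length _ _ w le_rfl
        (by rw [LV_fst hk]) (by rw [LV_fst hk])
    obtain ⟨hkpos, henc⟩ := ih (by omega) hsplitk
    exact hno.2 hkpos henc

end Encode2

section Final

open scoped Classical

variable (H : SimpleGraph (LadderV n))

noncomputable def encF : Fin n → Fin 4 := fun i => ⟨enc H (i : ℕ), enc_lt4 H _⟩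

lemma fe_encF {j : ℕ} (hj : j < n) : fe (encF H) j = enc H j := by
  simp [fe, hj, encF]

lemma con_encF : Con (encF H) := by
  rintro j ⟨h0, h1⟩
  by_cases hj1 : j + 1 < n
  · rw [fe_encF H hj1] at h1
    rw [fe_encF H (by omega)] at h0
    obtain ⟨-, -, -, h4⟩ := enc_one H h1
    exact h4 ⟨by omega, by simpa using h0⟩
  · rw [fe_big hj1] at h1; omega

lemma enc_three {j : ℕ} (h : enc H j = 3) : ¬ lowMem H j := by
  intro hl
  rw [enc_eq, if_neg (not_not_intro hl)] at h
  split_ifs at h <;> omega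

lemma enc_two {j : ℕ} (h : enc H j = 2) : lowMem H j ∧ ¬ highMem H j := by
  rw [enc_eq] at h
  by_cases hl : lowMem H j
  · by_cases hh : highMem H j
    · rw [if_neg (not_not_intro hl), if_neg (not_not_intro hh)] at h
      split_ifs at h <;> omega
    · exact ⟨hl, hh⟩
  · rw [if_pos hl] at h; omega

lemma split_of_isolated_top (hlad : H ≤ ladderGraph n) {k : ℕ} (hk : k ≤ n)
    (hrung : ¬ rungMem H k) (hhigh : k = n ∨ ¬ highMem H k) :
    ¬ (Hge H k).Reachable (LV n k 0) (LV n k 1) := by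
  apply no_reach_of_no_adj
  · intro h; rw [LV_eq_iff hk hk] at h; exact absurd h.2 (by decide)
  · rintro b ⟨hH, hc1, hc2⟩
    rcases ladder_adj_cases (hlad hH) with ⟨h1, h2⟩ | ⟨h1, h2⟩ | ⟨h1, h2⟩
    · apply hrung
      have hb2 : b.2 = 0 := by
        rcases fin2_cases b.2 with h | h
        · exact h
        · rw [LV_snd] at h2; exact absurd h.symm h2
      show H.Adj (LV n k 0) (LV n k 1)
      have h1' : (b.1 : ℕ) = k := by rw [LV_fst hk] at h1; omega
      rw [LV_eq_of h1' hb2]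
      exact hH.symm
    · rw [LV_fst hk] at h1
      rcases hhigh with h | h
      · omega
      · apply h
        show H.Adj (LV n k 1) (LV n (k + 1) 1)
        have hb2 : b.2 = 1 := by rw [LV_snd] at h2; exact h2.symm
        have hbeq : LV n (k + 1) (1 : Fin 2) = b := LV_eq_of (by omega) hb2
        rw [hbeq]
        exact hH
    · rw [LV_fst hk] at h1
      omega

lemma split_of_isolated_bot (hlad : H ≤ ladderGraph n) {k : ℕ} (hk : k ≤ n)
    (hrung : ¬ rungMem H k) (hlow : k = n ∨ ¬ lowMem H k) :
    ¬ (Hge H k).Reachable (LV n k 0) (LV n k 1) := by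
  intro hr
  refine no_reach_of_no_adj (Hge H k) ?_ ?_ hr.symm
  · intro h; rw [LV_eq_iff hk hk] at h; exact absurd h.2 (by decide)
  · rintro b ⟨hH, hc1, hc2⟩
    rcases ladder_adj_cases (hlad hH) with ⟨h1, h2⟩ | ⟨h1, h2⟩ | ⟨h1, h2⟩
    · apply hrung
      have hb2 : b.2 = 1 := by
        rcases fin2_cases b.2 with h | h
        · rw [LV_snd] at h2; exact absurd h.symm h2
        · exact h
      show H.Adj (LV n k 0) (LV n k 1)
      have h1' : (b.1 : ℕ) = k := by rw [LV_fst hk] at h1; omega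
      rw [LV_eq_of h1' hb2]
      exact hH
    · rw [LV_fst hk] at h1
      rcases hlow with h | h
      · omega
      · apply h
        show H.Adj (LV n k 0) (LV n (k + 1) 0)
        have hb2 : b.2 = 0 := by rw [LV_snd] at h2; exact h2.symm
        have hbeq : LV n (k + 1) (0 : Fin 2) = b := LV_eq_of (by omega) hb2
        rw [hbeq]
        exact hH
    · rw [LV_fst hk] at h1
      omega

lemma rung_mem_of (hconn : H.Connected) (hlad : H ≤ ladderGraph n) {k : ℕ} (hk : k ≤ n)
    (hOK : rungOK (encF H) k) : rungMem H k := by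
  by_contra hno
  obtain ⟨hA, hB⟩ := hOK
  have hBrule : ¬ (0 < k ∧ enc H (k - 1) = 0) := by
    rintro ⟨hkpos, henc⟩
    rcases hB with h | h
    · omega
    · rw [fe_encF H (by omega)] at h
      exact h henc
  by_cases hkn : k < n
  · have hA' : enc H k ≠ 1 := by
      rcases hA with h | h
      · omega
      · rw [fe_encF H hkn] at h; exact h
    have h4 := enc_lt4 H k
    have hcases : enc H k = 0 ∨ enc H k = 2 ∨ enc H k = 3 := by omega
    rcases hcases with h | h | h
    · obtain ⟨-, -, h3⟩ := enc_zero H h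
      rcases h3 with h | h
      · exact hno h
      · exact hBrule h
    · obtain ⟨-, hh⟩ := enc_two H h
      exact hBrule (split_prop H hconn hlad k hk
        (split_of_isolated_top H hlad hk hno (Or.inr hh)))
    · exact hBrule (split_prop H hconn hlad k hk
        (split_of_isolated_bot H hlad hk hno (Or.inr (enc_three H h))))
  · have hkn' : k = n := by omega
    exact hBrule (split_prop H hconn hlad k hk
      (split_of_isolated_top H hlad hk hno (Or.inl hkn')))

lemma tf_enc_le (hconn : H.Connected) (hlad : H ≤ ladderGraph n) : Tf (encF H) ≤ H := by
  intro u v hadj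
  rcases hadj with ⟨h1, h2, h3⟩ | ⟨h1, ⟨h2, h3⟩ | ⟨h2, h3⟩⟩
  · have hk : (u.1 : ℕ) ≤ n := by omega
    have hr := rung_mem_of H hconn hlad hk h3
    rcases fin2_cases u.2 with hu2 | hu2
    · have hv2 : v.2 = 1 := by
        rcases fin2_cases v.2 with h | h
        · exact absurd (hu2.trans h.symm) h2
        · exact h
      show H.Adj u v
      rw [← LV_eq_of rfl hu2, ← LV_eq_of h1.symm hv2]
      exact hr
    · have hv2 : v.2 = 0 := by
        rcases fin2_cases v.2 with h | h
        · exact h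
        · exact absurd (hu2.trans h.symm) h2
      show H.Adj u v
      rw [← LV_eq_of rfl hu2, ← LV_eq_of h1.symm hv2]
      exact hr.symm
  · have hun : (u.1 : ℕ) < n := by omega
    rcases fin2_cases u.2 with hu2 | hu2
    · rw [rowOK, hu2, if_pos rfl] at h3
      have hlm : lowMem H (u.1 : ℕ) := enc_ne3 H (by rw [← fe_encF H hun]; exact h3)
      show H.Adj u v
      rw [← LV_eq_of rfl hu2,
        ← LV_eq_of (show ((v.1 : Fin (n+1)) : ℕ) = (u.1 : ℕ) + 1 by omega) (h1.symm.trans hu2)]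
      exact hlm
    · rw [rowOK, hu2, if_neg (by decide)] at h3
      have hhm : highMem H (u.1 : ℕ) :=
        enc_ne2 H (F1 H hconn hlad hun) (by rw [← fe_encF H hun]; exact h3)
      show H.Adj u v
      rw [← LV_eq_of rfl hu2,
        ← LV_eq_of (show ((v.1 : Fin (n+1)) : ℕ) = (u.1 : ℕ) + 1 by omega) (h1.symm.trans hu2)]
      exact hhm
  · have hvn : (v.1 : ℕ) < n := by omega
    rcases fin2_cases v.2 with hv2 | hv2
    · rw [rowOK, hv2, if_pos rfl] at h3
      have hlm : lowMem H (v.1 : ℕ) := enc_ne3 H (by rw [← fe_encF H hvn]; exact h3)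
      show H.Adj u v
      rw [← LV_eq_of rfl hv2,
        ← LV_eq_of (show ((u.1 : Fin (n+1)) : ℕ) = (v.1 : ℕ) + 1 by omega) (h1.trans hv2)]
      exact hlm.symm
    · rw [rowOK, hv2, if_neg (by decide)] at h3
      have hhm : highMem H (v.1 : ℕ) :=
        enc_ne2 H (F1 H hconn hlad hvn) (by rw [← fe_encF H hvn]; exact h3)
      show H.Adj u v
      rw [← LV_eq_of rfl hv2,
        ← LV_eq_of (show ((u.1 : Fin (n+1)) : ℕ) = (v.1 : ℕ) + 1 by omega) (h1.trans hv2)]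
      exact hhm.symm

lemma tf_enc_eq (hlad : H ≤ ladderGraph n) (htree : H.IsTree) : Tf (encF H) = H := by
  have hconn : H.Connected := htree.1
  have hle : Tf (encF H) ≤ H := tf_enc_le H hconn hlad
  have hsub : (Tf (encF H)).edgeFinset ⊆ H.edgeFinset := SimpleGraph.edgeFinset_mono hle
  have hc1 : (Tf (encF H)).edgeFinset.card = 2 * n + 1 := tf_card (con_encF H)
  have hc2 : H.edgeFinset.card = 2 * n + 1 := by
    have := htree.card_edgeFinset
    simp only [LadderV, Fintype.card_prod, Fintype.card_fin] at this
    omega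
  have heq : (Tf (encF H)).edgeFinset = H.edgeFinset :=
    Finset.eq_of_subset_of_card_le hsub (by omega)
  exact SimpleGraph.edgeFinset_inj.mp heq

end Final

end LadderTree

/-- Lemma 2.7: for every `n ≥ 1` there is an explicit bijection between
`𝕋^{(n)} = {(T_1,…,T_n) ∈ {A,B,C,D}^n : (T_i, T_{i+1}) ≠ (A,B)}` (labels `A,B,C,D`
encoded as `0,1,2,3 : Fin 4`) and the set of spanning trees of the ladder `G^{(n)}`;
in particular the two sets have the same cardinality. -/
theorem spanning_tree_bijection (n : ℕ) (hn : 1 ≤ n) :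
    Nonempty
      ({f : Fin n → Fin 4 //
          ∀ (i : Fin n) (h : (i : ℕ) + 1 < n), ¬(f i = 0 ∧ f ⟨(i : ℕ) + 1, h⟩ = 1)} ≃
        SpanningTree n) ∧
    Nat.card {f : Fin n → Fin 4 //
        ∀ (i : Fin n) (h : (i : ℕ) + 1 < n), ¬(f i = 0 ∧ f ⟨(i : ℕ) + 1, h⟩ = 1)} =
      Nat.card (SpanningTree n) := by
  classical
  let Ψ : {f : Fin n → Fin 4 //
      ∀ (i : Fin n) (h : (i : ℕ) + 1 < n), ¬(f i = 0 ∧ f ⟨(i : ℕ) + 1, h⟩ = 1)} →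
      SpanningTree n :=
    fun fc => ⟨LadderTree.Tf fc.1, LadderTree.tf_le_ladder fc.1,
      LadderTree.tf_isTree (LadderTree.con_of fc.2)⟩
  have hinj : Function.Injective Ψ := by
    intro a b h
    exact Subtype.ext (LadderTree.tf_inj (LadderTree.con_of a.2) (LadderTree.con_of b.2)
      (congrArg Subtype.val h))
  have hsurj : Function.Surjective Ψ := by
    rintro ⟨H, hle, htree⟩
    have hconH := LadderTree.con_encF H
    refine ⟨⟨LadderTree.encF H, ?_⟩, ?_⟩
    · intro i h hcon
      apply hconH (i : ℕ)
      constructor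
      · rw [show ((i : ℕ)) = ((i : Fin n) : ℕ) from rfl, LadderTree.fe_fin]
        rw [hcon.1]
        rfl
      · rw [show ((i : ℕ) + 1) = ((⟨(i : ℕ) + 1, h⟩ : Fin n) : ℕ) from rfl, LadderTree.fe_fin]
        rw [hcon.2]
        rfl
    · exact Subtype.ext (LadderTree.tf_enc_eq H hle htree)
  have hbij : Function.Bijective Ψ := ⟨hinj, hsurj⟩
  exact ⟨⟨Equiv.ofBijective Ψ hbij⟩, Nat.card_congr (Equiv.ofBijective Ψ hbij)⟩
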